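/- With B_n and C_n as in the paper (B_1 = C_1 = 1, B_0 the empty matrix), for all n ≥ 0 one has det(B_{n+1}·C_{n+1}) = det(B_n). -/

import Mathlib

/-- With `B_n` and `C_n` as in the paper (`B_1 = C_1 = 1`, `B_0` the empty
matrix), for all `n ≥ 0` one has `det(B_{n+1}·C_{n+1}) = det(B_n)`.  Here `f`
is a nonzero non-unit of the ring of integers `O` of the nonarchimedean local
field `F`, and determinants are taken in `F`. -/
theorem det_BC_eq_det_B {F : Type*} [Field F] (O : Subring F) (f : F)
    (hfO : f ∈ O) (hf0 : f ≠ 0) (hfnu : ¬ IsUnit (⟨f, hfO⟩ : O)) (n : ℕ)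
    (B : ∀ m : ℕ, Matrix (Fin m) (Fin m) F)
    (hB : ∀ m : ℕ, B m = Matrix.of fun i j : Fin m =>
      if (i : ℕ) = 0 ∧ (j : ℕ) = 0 then (1 : F)
      else if (i : ℕ) = (j : ℕ) + 1 then f
      else if i = j then -1 else 0)
    (C : Matrix (Fin (n + 1)) (Fin (n + 1)) F)
    (hC : C = Matrix.of fun i j : Fin (n + 1) =>
      if (i : ℕ) = n then (if (j : ℕ) = 0 then f ^ n else -(f ^ (n - (j : ℕ))))
      else if i = j then (1 : F) else 0) :
    (B (n + 1) * C).det = (B n).det := by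
  have hBdet : ∀ m : ℕ, (B m).det = (-1 : F) ^ (m - 1) := by
    intro m
    rw [hB m, Matrix.det_of_lowerTriangular _ (by
      intro i j hij
      have hlt : (i : ℕ) < (j : ℕ) := by exact_mod_cast hij
      have h1 : ¬ ((i : ℕ) = 0 ∧ (j : ℕ) = 0) := by omega
      have h2 : ¬ ((i : ℕ) = (j : ℕ) + 1) := by omega
      have h3 : i ≠ j := by intro h; subst h; omega
      simp [h1, h2, h3])]
    have key : ∀ i : Fin m, (Matrix.of fun i j : Fin m =>
        if (i : ℕ) = 0 ∧ (j : ℕ) = 0 then (1 : F)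
        else if (i : ℕ) = (j : ℕ) + 1 then f
        else if i = j then -1 else 0) i i
        = if (i : ℕ) = 0 then 1 else -1 := by
      intro i
      simp only [Matrix.of_apply]
      rcases Nat.eq_zero_or_pos (i : ℕ) with h | h
      · simp [h]
      · have h1 : ¬ ((i : ℕ) = 0) := by omega
        have h2 : ¬ ((i : ℕ) = (i : ℕ) + 1) := by omega
        simp [h1, h2]
    rw [Finset.prod_congr rfl fun i _ => key i]
    rcases Nat.eq_zero_or_pos m with hm | hm
    · subst hm; simp
    · obtain ⟨k, rfl⟩ := Nat.exists_eq_succ_of_ne_zero (by omega : m ≠ 0)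
      rw [Fin.prod_univ_succ]
      simp [Fin.val_succ]
  have hCdet : C.det = if n = 0 then (1 : F) else -1 := by
    rw [hC, Matrix.det_of_lowerTriangular _ (by
      intro i j hij
      have hlt : (i : ℕ) < (j : ℕ) := by exact_mod_cast hij
      have h1 : ¬ ((i : ℕ) = n) := by omega
      have h3 : i ≠ j := by intro h; subst h; omega
      simp [h1, h3])]
    have key : ∀ i : Fin (n + 1), (Matrix.of fun i j : Fin (n + 1) =>
        if (i : ℕ) = n then (if (j : ℕ) = 0 then f ^ n else -(f ^ (n - (j : ℕ))))
        else if i = j then (1 : F) else 0) i i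
        = if (i : ℕ) = n then (if n = 0 then (1 : F) else -1) else 1 := by
      intro i
      simp only [Matrix.of_apply]
      by_cases h : (i : ℕ) = n
      · rcases Nat.eq_zero_or_pos n with hn | hn
        · simp [h, hn]
        · have : ¬ ((i : ℕ) = 0) := by omega
          have hn' : n ≠ 0 := by omega
          simp [h, this, hn', Nat.sub_self]
      · simp [h]
    rw [Finset.prod_congr rfl fun i _ => key i]
    have hcond : ∀ i : Fin (n + 1), ((i : ℕ) = n) = (i = Fin.last n) := by
      intro i; simp [Fin.ext_iff, Fin.val_last]
    simp only [hcond]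
    simp
  rw [Matrix.det_mul, hBdet (n + 1), hBdet n]
  rcases Nat.eq_zero_or_pos n with hn | hn
  · subst hn; rw [hCdet]; simp
  · obtain ⟨k, rfl⟩ := Nat.exists_eq_succ_of_ne_zero (by omega : n ≠ 0)
    rw [hCdet]
    simp [pow_succ]
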